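/- For smooth positive probability densities p⋆ and p_θ on ℝ^D satisfying suitable decay at infinity (so boundary terms in integration by parts vanish and all integrals are finite), the Fisher divergence D∇[p⋆ ‖ p_θ] = E_{p⋆}[½‖∇ log p⋆(x) − ∇ log p_θ(x)‖²] equals E_{p⋆}[½‖∇ log p⋆(x)‖²] + E_{p⋆}[½‖∇ log p_θ(x)‖² + Δ log p_θ(x)], i.e., the Fisher divergence decomposes into a constant depending only on p⋆ plus the expected Hyvärinen score of p_θ. -/

import Mathlib

open MeasureTheory Real Filter
open scoped RealInnerProductSpace BigOperators

/-- Laplacian of `f : ℝ^n → ℝ` as the sum of second partial derivatives. -/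
noncomputable def lap {n : ℕ} (f : EuclideanSpace ℝ (Fin n) → ℝ)
    (x : EuclideanSpace ℝ (Fin n)) : ℝ :=
  ∑ i : Fin n, fderiv ℝ (fun y => fderiv ℝ f y (EuclideanSpace.single i 1)) x
    (EuclideanSpace.single i 1)

/-- Hyvärinen score `s∇[f](x) = ½‖∇ log f(x)‖² + Δ log f(x)`. -/
noncomputable def hyv {n : ℕ} (f : EuclideanSpace ℝ (Fin n) → ℝ)
    (x : EuclideanSpace ℝ (Fin n)) : ℝ :=
  (1/2) * ‖gradient (fun y => Real.log (f y)) x‖^2 + lap (fun y => Real.log (f y)) x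

section Aux

open Set

/-- If a family of C¹ functions on `ℝ^{n+1}` is integrable with integrable divergence, then
the integral of the divergence vanishes. -/
lemma integral_divergence_eq_zero_pi {n : ℕ}
    (f : Fin (n+1) → (Fin (n+1) → ℝ) → ℝ)
    (f' : Fin (n+1) → (Fin (n+1) → ℝ) → ((Fin (n+1) → ℝ) →L[ℝ] ℝ))
    (hd : ∀ i x, HasFDerivAt (f i) (f' i x) x)
    (hfi : ∀ i, Integrable (f i))
    (hdiv : Integrable (fun x => ∑ i, f' i x (Pi.single i 1))) :
    ∫ x, ∑ i, f' i x (Pi.single i 1) = 0 := by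
  set Div : (Fin (n+1) → ℝ) → ℝ := fun x => ∑ i, f' i x (Pi.single i 1) with hDivdef
  set L : ℝ := ∫ x, Div x with hLdef
  have hFt : ∀ i : Fin (n+1),
      Integrable (fun p : ℝ × (Fin n → ℝ) => f i (i.insertNth p.1 p.2))
        ((volume : Measure ℝ).prod (volume : Measure (Fin n → ℝ))) := by
    intro i
    have hP : MeasurePreserving ((MeasurableEquiv.piFinSuccAbove (fun _ : Fin (n+1) => ℝ) i).symm)
        ((volume : Measure ℝ).prod (volume : Measure (Fin n → ℝ)))
        (volume : Measure (Fin (n+1) → ℝ)) := by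
      have := (measurePreserving_piFinSuccAbove (fun _ : Fin (n+1) => (volume : Measure ℝ)) i).symm
      simpa [volume_pi] using this
    have := (hP.integrable_comp_emb
      (MeasurableEquiv.measurableEmbedding _) (g := f i)).2 (hfi i)
    exact this
  set h : Fin (n+1) → ℝ → ℝ := fun i t => ∫ y, ‖f i (i.insertNth t y)‖ with hhdef
  have hInt_h : ∀ i, Integrable (h i) := fun i => (hFt i).integral_norm_prod_left
  set H : ℝ → ℝ := fun t => ∑ i, (h i t + h i (-t)) with hHdef
  have hIntH : Integrable H := by
    apply integrable_finset_sum
    intro i _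
    exact (hInt_h i).add ((hInt_h i).comp_neg)
  have htend : Tendsto (fun R : ℝ => ∫ x in Icc (fun _ : Fin (n+1) => -R) (fun _ => R), Div x)
      atTop (nhds L) := by
    have hmain := tendsto_integral_filter_of_dominated_convergence (μ := volume) (l := atTop)
      (F := fun R : ℝ => (Icc (fun _ : Fin (n+1) => -R) (fun _ => R)).indicator Div)
      (f := Div) (fun x => ‖Div x‖)
      (Eventually.of_forall fun R => hdiv.aestronglyMeasurable.indicator measurableSet_Icc)
      (Eventually.of_forall fun R => Eventually.of_forall fun x =>
        norm_indicator_le_norm_self Div x)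
      hdiv.norm
      (Eventually.of_forall fun x => by
        have hev : ∀ᶠ R : ℝ in atTop,
            Div x = (Icc (fun _ : Fin (n+1) => -R) (fun _ => R)).indicator Div x := by
          filter_upwards [eventually_ge_atTop (‖x‖)] with R hR
          have hmem : x ∈ Icc (fun _ : Fin (n+1) => -R) (fun _ => R) := by
            constructor
            · intro i
              have := abs_le.mp ((norm_le_pi_norm x i).trans hR)
              show -R ≤ x i
              linarith [this.1]
            · intro i
              have := abs_le.mp ((norm_le_pi_norm x i).trans hR)
              show x i ≤ R
              linarith [this.2]
          exact (indicator_of_mem hmem Div).symm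
        exact Tendsto.congr' hev tendsto_const_nhds)
    convert hmain using 2 with R
    rw [integral_indicator measurableSet_Icc]
  have hdivthm : ∀ R : ℝ, 0 ≤ R →
      ∫ x in Icc (fun _ : Fin (n+1) => -R) (fun _ => R), Div x =
        ∑ i : Fin (n+1),
          ((∫ y in Icc ((fun _ : Fin (n+1) => -R) ∘ i.succAbove) ((fun _ : Fin (n+1) => R) ∘ i.succAbove),
              f i (i.insertNth R y)) -
            ∫ y in Icc ((fun _ : Fin (n+1) => -R) ∘ i.succAbove) ((fun _ : Fin (n+1) => R) ∘ i.succAbove),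
              f i (i.insertNth (-R) y)) := by
    intro R hR
    exact integral_divergence_of_hasFDerivAt_off_countable'
      (fun _ => -R) (fun _ => R) (fun i => by simp; linarith) f f' ∅ countable_empty
      (fun i => fun x _ => (hd i x).continuousAt.continuousWithinAt)
      (fun x _ i => hd i x) hdiv.integrableOn
  have hbound : ∀ᵐ R : ℝ,
      |∑ i : Fin (n+1),
          ((∫ y in Icc ((fun _ : Fin (n+1) => -R) ∘ i.succAbove) ((fun _ : Fin (n+1) => R) ∘ i.succAbove),
              f i (i.insertNth R y)) -
            ∫ y in Icc ((fun _ : Fin (n+1) => -R) ∘ i.succAbove) ((fun _ : Fin (n+1) => R) ∘ i.succAbove),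
              f i (i.insertNth (-R) y))| ≤ H R := by
    have hslice : ∀ᵐ t : ℝ, ∀ i : Fin (n+1),
        Integrable (fun y => f i (i.insertNth t y)) (volume : Measure (Fin n → ℝ)) := by
      rw [ae_all_iff]
      exact fun i => (hFt i).prod_right_ae
    have hnegslice : ∀ᵐ t : ℝ, ∀ i : Fin (n+1),
        Integrable (fun y => f i (i.insertNth (-t) y)) (volume : Measure (Fin n → ℝ)) :=
      (Measure.measurePreserving_neg (volume : Measure ℝ)).quasiMeasurePreserving.ae hslice
    filter_upwards [hslice, hnegslice] with R hs hns
    calc |∑ i : Fin (n+1), _| ≤ ∑ i : Fin (n+1), |(∫ y in Icc ((fun _ : Fin (n+1) => -R) ∘ i.succAbove) ((fun _ : Fin (n+1) => R) ∘ i.succAbove),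
              f i (i.insertNth R y)) -
            ∫ y in Icc ((fun _ : Fin (n+1) => -R) ∘ i.succAbove) ((fun _ : Fin (n+1) => R) ∘ i.succAbove),
              f i (i.insertNth (-R) y)| := Finset.abs_sum_le_sum_abs _ _
      _ ≤ H R := by
        apply Finset.sum_le_sum
        intro i _
        have key : ∀ (t : ℝ), Integrable (fun y => f i (i.insertNth t y)) (volume : Measure (Fin n → ℝ)) →
            |∫ y in Icc ((fun _ : Fin (n+1) => -R) ∘ i.succAbove) ((fun _ : Fin (n+1) => R) ∘ i.succAbove),
              f i (i.insertNth t y)| ≤ h i t := by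
          intro t hint
          calc |∫ y in Icc ((fun _ : Fin (n+1) => -R) ∘ i.succAbove) ((fun _ : Fin (n+1) => R) ∘ i.succAbove),
              f i (i.insertNth t y)|
              ≤ ∫ y in Icc ((fun _ : Fin (n+1) => -R) ∘ i.succAbove) ((fun _ : Fin (n+1) => R) ∘ i.succAbove),
              ‖f i (i.insertNth t y)‖ := by
                rw [← Real.norm_eq_abs]
                exact norm_integral_le_integral_norm _
            _ ≤ ∫ y, ‖f i (i.insertNth t y)‖ :=
                setIntegral_le_integral hint.norm (Eventually.of_forall fun y => norm_nonneg _)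
            _ = h i t := rfl
        calc |(∫ y in Icc ((fun _ : Fin (n+1) => -R) ∘ i.succAbove) ((fun _ : Fin (n+1) => R) ∘ i.succAbove),
              f i (i.insertNth R y)) -
            ∫ y in Icc ((fun _ : Fin (n+1) => -R) ∘ i.succAbove) ((fun _ : Fin (n+1) => R) ∘ i.succAbove),
              f i (i.insertNth (-R) y)|
            ≤ |∫ y in Icc ((fun _ : Fin (n+1) => -R) ∘ i.succAbove) ((fun _ : Fin (n+1) => R) ∘ i.succAbove),
              f i (i.insertNth R y)| +
              |∫ y in Icc ((fun _ : Fin (n+1) => -R) ∘ i.succAbove) ((fun _ : Fin (n+1) => R) ∘ i.succAbove),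
              f i (i.insertNth (-R) y)| := abs_sub _ _
          _ ≤ h i R + h i (-R) := add_le_add (key R (hs i)) (key (-R) (hns i))
  have hLle : ∀ ε : ℝ, 0 < ε → |L| ≤ ε := by
    intro ε hε
    by_contra hc
    push_neg at hc
    obtain ⟨R₀, hR₀⟩ := eventually_atTop.1 ((Metric.tendsto_nhds.1 htend) ε hε)
    set R₁ : ℝ := max R₀ 0 with hR₁def
    have hconst : IntegrableOn (fun _ : ℝ => |L| - ε) (Ioi R₁) volume := by
      apply Integrable.mono' (hIntH.integrableOn) aestronglyMeasurable_const
      rw [ae_restrict_iff' measurableSet_Ioi]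
      filter_upwards [hbound] with R hb hmem
      have hRge : R₀ ≤ R := le_trans (le_max_left _ _) (le_of_lt hmem)
      have hR0 : 0 ≤ R := le_trans (le_max_right _ _) (le_of_lt hmem)
      have hdist := hR₀ R hRge
      rw [Real.dist_eq] at hdist
      have heq := hdivthm R hR0
      have h1 : |∫ x in Icc (fun _ : Fin (n+1) => -R) (fun _ => R), Div x| ≤ H R := heq ▸ hb
      have h2 := abs_sub_abs_le_abs_sub L (∫ x in Icc (fun _ : Fin (n+1) => -R) (fun _ => R), Div x)
      rw [abs_sub_comm] at hdist
      rw [Real.norm_eq_abs, abs_of_pos (by linarith)]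
      linarith
    rw [integrableOn_const_iff] at hconst
    rcases hconst with h0 | hfin
    · rw [enorm_eq_zero] at h0
      linarith
    · rw [Real.volume_Ioi] at hfin
      exact absurd hfin (by simp)
  have habs0 : |L| ≤ 0 := by
    by_contra hcon
    push_neg at hcon
    linarith [hLle (|L|/2) (by linarith)]
  exact abs_eq_zero.1 (le_antisymm habs0 (abs_nonneg L))

/-- Euclidean-space version of `integral_divergence_eq_zero_pi`. -/
lemma integral_divergence_eq_zero_euclid {D : ℕ}
    (V : Fin D → EuclideanSpace ℝ (Fin D) → ℝ)
    (V' : Fin D → EuclideanSpace ℝ (Fin D) → (EuclideanSpace ℝ (Fin D) →L[ℝ] ℝ))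
    (hd : ∀ i x, HasFDerivAt (V i) (V' i x) x)
    (hVi : ∀ i, Integrable (V i))
    (hdiv : Integrable (fun x => ∑ i, V' i x (EuclideanSpace.single i 1))) :
    ∫ x, ∑ i, V' i x (EuclideanSpace.single i 1) = 0 := by
  cases D with
  | zero => simp
  | succ n =>
    set φ := (MeasurableEquiv.toLp 2 (Fin (n+1) → ℝ)).symm with hφdef
    have hφ := EuclideanSpace.volume_preserving_symm_measurableEquiv_toLp (Fin (n+1))
    set ι := EuclideanSpace.equiv (Fin (n+1)) ℝ with hιdef
    have hZ := integral_divergence_eq_zero_pi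
      (f := fun i x => V i (ι.symm x))
      (f' := fun i x => (V' i (ι.symm x)).comp (ι.symm : (Fin (n+1) → ℝ) →L[ℝ] _))
      (fun i x => ((hd i (ι.symm x)).comp x (ι.symm.hasFDerivAt)))
      (fun i => ((hφ.symm).integrable_comp_emb (φ.symm.measurableEmbedding)).2 (hVi i))
      (((hφ.symm).integrable_comp_emb (φ.symm.measurableEmbedding)).2 hdiv)
    rw [← (hφ.symm).integral_comp (φ.symm.measurableEmbedding)
      (fun x => ∑ i, V' i x (EuclideanSpace.single i 1))]
    exact hZ

lemma gradient_apply_eq {n : ℕ} {f : EuclideanSpace ℝ (Fin n) → ℝ} {x : EuclideanSpace ℝ (Fin n)}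
    (i : Fin n) : gradient f x i = fderiv ℝ f x (EuclideanSpace.single i 1) := by
  have h : fderiv ℝ f x (EuclideanSpace.single i 1)
      = ⟪gradient f x, EuclideanSpace.single i 1⟫ := by
    rw [gradient]
    simp [InnerProductSpace.toDual_apply_apply]
  rw [h, EuclideanSpace.inner_single_right]
  simp

lemma gradient_log_smul {n : ℕ} {f : EuclideanSpace ℝ (Fin n) → ℝ} {x : EuclideanSpace ℝ (Fin n)}
    (hf : DifferentiableAt ℝ f x) (hfx : f x ≠ 0) :
    gradient (fun y => Real.log (f y)) x = (f x)⁻¹ • gradient f x := by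
  have hlog : HasFDerivAt (fun y => Real.log (f y)) ((f x)⁻¹ • fderiv ℝ f x) x :=
    (Real.hasDerivAt_log hfx).comp_hasFDerivAt x hf.hasFDerivAt
  rw [gradient, hlog.fderiv, gradient]
  simp [map_smulₛₗ]

lemma abs_coord_le_norm {n : ℕ} (v : EuclideanSpace ℝ (Fin n)) (i : Fin n) : |v i| ≤ ‖v‖ := by
  have h := abs_real_inner_le_norm v (EuclideanSpace.single i (1:ℝ))
  simpa [EuclideanSpace.inner_single_right, EuclideanSpace.norm_single] using h

end Aux

set_option maxHeartbeats 1600000 in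
/-- Fisher divergence decomposes as a data-dependent constant plus the expected
Hyvärinen score. -/
theorem fisher_divergence_eq_const_add_expected_hyvarinen_score
    {D : ℕ} (ps pt : EuclideanSpace ℝ (Fin D) → ℝ)
    (hps : ContDiff ℝ 2 ps) (hpt : ContDiff ℝ 2 pt)
    (hpos : ∀ x, 0 < ps x) (hpos' : ∀ x, 0 < pt x)
    (hnorm : ∫ x, ps x = 1) (hnorm' : ∫ x, pt x = 1)
    (hdecay : Tendsto (fun x => ‖gradient ps x‖ * pt x / ps x)
      (cocompact (EuclideanSpace ℝ (Fin D))) (nhds 0))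
    (hi0 : Integrable (fun x => ps x *
      ((1/2) * ‖gradient (fun y => Real.log (ps y)) x
        - gradient (fun y => Real.log (pt y)) x‖^2)))
    (hi1 : Integrable (fun x => ps x * ‖gradient (fun y => Real.log (ps y)) x‖^2))
    (hi2 : Integrable (fun x => ps x * ‖gradient (fun y => Real.log (pt y)) x‖^2))
    (hi3 : Integrable (fun x => ps x * |lap (fun y => Real.log (pt y)) x|)) :
    ∫ x, ps x * ((1/2) * ‖gradient (fun y => Real.log (ps y)) x
        - gradient (fun y => Real.log (pt y)) x‖^2)
      = (∫ x, ps x * ((1/2) * ‖gradient (fun y => Real.log (ps y)) x‖^2))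
        + ∫ x, ps x * hyv pt x := by
  classical
  have hpsd : Differentiable ℝ ps := hps.differentiable (by norm_num)
  have hptd : Differentiable ℝ pt := hpt.differentiable (by norm_num)
  have hLps : ContDiff ℝ 2 (fun y => Real.log (ps y)) := by
    rw [contDiff_iff_contDiffAt]
    exact fun x => (Real.contDiffAt_log.2 (hpos x).ne').comp x hps.contDiffAt
  have hLpt : ContDiff ℝ 2 (fun y => Real.log (pt y)) := by
    rw [contDiff_iff_contDiffAt]
    exact fun x => (Real.contDiffAt_log.2 (hpos' x).ne').comp x hpt.contDiffAt
  set a : EuclideanSpace ℝ (Fin D) → EuclideanSpace ℝ (Fin D) :=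
    gradient (fun y => Real.log (ps y)) with hadef
  set b : EuclideanSpace ℝ (Fin D) → EuclideanSpace ℝ (Fin D) :=
    gradient (fun y => Real.log (pt y)) with hbdef
  -- continuity facts
  have hacont : Continuous a := by
    rw [hadef]
    have h1 : Continuous fun x => fderiv ℝ (fun y => Real.log (ps y)) x :=
      (hLps.fderiv_right (m := 1) (by norm_num)).continuous
    exact (LinearIsometryEquiv.continuous _).comp h1
  have hbcont : Continuous b := by
    rw [hbdef]
    have h1 : Continuous fun x => fderiv ℝ (fun y => Real.log (pt y)) x :=
      (hLpt.fderiv_right (m := 1) (by norm_num)).continuous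
    exact (LinearIsometryEquiv.continuous _).comp h1
  have hb'cd : ∀ i : Fin D, ContDiff ℝ 1
      (fun x => fderiv ℝ (fun y => Real.log (pt y)) x (EuclideanSpace.single i 1)) :=
    fun i => (hLpt.fderiv_right (m := 1) (by norm_num)).clm_apply contDiff_const
  have hlapcont : Continuous (fun x => lap (fun y => Real.log (pt y)) x) := by
    have heq : (fun x => lap (fun y => Real.log (pt y)) x)
        = fun x => ∑ i : Fin D, fderiv ℝ
          (fun z => fderiv ℝ (fun y => Real.log (pt y)) z (EuclideanSpace.single i 1)) x
          (EuclideanSpace.single i 1) := rfl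
    rw [heq]
    apply continuous_finset_sum
    intro i _
    exact (((hb'cd i).fderiv_right (m := 0) (by norm_num)).clm_apply contDiff_const).continuous
  -- coordinates of b
  have hbcoord : ∀ (x : EuclideanSpace ℝ (Fin D)) (i : Fin D),
      b x i = fderiv ℝ (fun y => Real.log (pt y)) x (EuclideanSpace.single i 1) :=
    fun x i => gradient_apply_eq i
  have hgradps : ∀ x, gradient ps x = ps x • a x := by
    intro x
    rw [hadef, gradient_log_smul (hpsd x) (hpos x).ne', smul_inv_smul₀ (hpos x).ne']
  -- integrability of ps
  have ips : Integrable ps := by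
    by_contra hcon
    rw [integral_undef hcon] at hnorm
    exact one_ne_zero hnorm.symm
  -- the vector field and its derivative
  set V : Fin D → EuclideanSpace ℝ (Fin D) → ℝ :=
    fun i x => ps x * fderiv ℝ (fun y => Real.log (pt y)) x (EuclideanSpace.single i 1) with hVdef
  set V' : Fin D → EuclideanSpace ℝ (Fin D) → (EuclideanSpace ℝ (Fin D) →L[ℝ] ℝ) :=
    fun i x => ps x • fderiv ℝ
        (fun z => fderiv ℝ (fun y => Real.log (pt y)) z (EuclideanSpace.single i 1)) x
      + (fderiv ℝ (fun y => Real.log (pt y)) x (EuclideanSpace.single i 1)) • fderiv ℝ ps x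
    with hV'def
  have hdV : ∀ i x, HasFDerivAt (V i) (V' i x) x := by
    intro i x
    exact (hpsd x).hasFDerivAt.mul (((hb'cd i).differentiable one_ne_zero x).hasFDerivAt)
  -- pointwise divergence identity
  have hdivpt : ∀ x, (∑ i, V' i x (EuclideanSpace.single i 1))
      = ps x * ⟪a x, b x⟫ + ps x * lap (fun y => Real.log (pt y)) x := by
    intro x
    have hsplit : ∀ i : Fin D, V' i x (EuclideanSpace.single i 1)
        = ps x * (fderiv ℝ
            (fun z => fderiv ℝ (fun y => Real.log (pt y)) z (EuclideanSpace.single i 1)) x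
            (EuclideanSpace.single i 1))
          + (b x i) * (gradient ps x i) := by
      intro i
      rw [hV'def]
      simp only [ContinuousLinearMap.add_apply, ContinuousLinearMap.coe_smul', Pi.smul_apply,
        smul_eq_mul]
      rw [hbcoord, gradient_apply_eq]
    rw [Finset.sum_congr rfl fun i _ => hsplit i, Finset.sum_add_distrib, ← Finset.mul_sum]
    have hlapeq : (∑ i : Fin D, fderiv ℝ
        (fun z => fderiv ℝ (fun y => Real.log (pt y)) z (EuclideanSpace.single i 1)) x
        (EuclideanSpace.single i 1)) = lap (fun y => Real.log (pt y)) x := rfl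
    rw [hlapeq]
    have hinner : (∑ i : Fin D, b x i * gradient ps x i) = ps x * ⟪a x, b x⟫ := by
      have h1 : ⟪b x, gradient ps x⟫ = ∑ i, b x i * gradient ps x i := by
        simp only [PiLp.inner_apply, RCLike.inner_apply, conj_trivial, mul_comm]
      rw [← h1, hgradps x, real_inner_smul_right, real_inner_comm]
    rw [hinner]
    ring
  -- integrability of the components
  have hVint : ∀ i, Integrable (V i) := by
    intro i
    apply Integrable.mono' ((ips.add hi2).const_mul (1/2))
      ((hps.continuous.mul (hb'cd i).continuous).aestronglyMeasurable)
    filter_upwards with x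
    have h1 : |fderiv ℝ (fun y => Real.log (pt y)) x (EuclideanSpace.single i 1)| ≤ ‖b x‖ := by
      rw [← hbcoord x i]; exact abs_coord_le_norm _ _
    have h2 := hpos x
    simp only [Pi.add_apply, Pi.mul_apply]
    rw [Real.norm_eq_abs, abs_mul, abs_of_pos h2]
    have hb0 : (0:ℝ) ≤ ‖b x‖ := norm_nonneg _
    nlinarith [sq_nonneg (‖b x‖ - 1), mul_le_mul_of_nonneg_left h1 h2.le]
  have hDivInt : Integrable (fun x =>
      ps x * ⟪a x, b x⟫ + ps x * lap (fun y => Real.log (pt y)) x) := by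
    apply Integrable.add
    · apply Integrable.mono' ((hi1.add hi2).const_mul (1/2))
        ((hps.continuous.mul (hacont.inner hbcont)).aestronglyMeasurable)
      filter_upwards with x
      simp only [Pi.add_apply, Pi.mul_apply]
      rw [Real.norm_eq_abs, abs_mul, abs_of_pos (hpos x)]
      have h := abs_real_inner_le_norm (a x) (b x)
      nlinarith [sq_nonneg (‖a x‖ - ‖b x‖), (hpos x).le, norm_nonneg (a x), norm_nonneg (b x),
        mul_le_mul_of_nonneg_left h (hpos x).le]
    · apply Integrable.mono' hi3 ((hps.continuous.mul hlapcont).aestronglyMeasurable)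
      filter_upwards with x
      exact le_of_eq (by rw [Pi.mul_apply, Real.norm_eq_abs, abs_mul, abs_of_pos (hpos x)])
  have hhyveq : ∀ x, hyv pt x
      = (1/2) * ‖b x‖^2 + lap (fun y => Real.log (pt y)) x := by
    intro x
    simp only [hyv, hbdef]
  have hHyvInt : Integrable (fun x => ps x * hyv pt x) := by
    apply Integrable.mono' ((hi2.const_mul (1/2)).add hi3)
    · have hc : Continuous fun x => hyv pt x := by
        have : (fun x => hyv pt x)
            = fun x => (1/2) * ‖b x‖^2 + lap (fun y => Real.log (pt y)) x :=
          funext hhyveq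
        rw [this]
        exact (continuous_const.mul ((hbcont.norm).pow 2)).add hlapcont
      exact (hps.continuous.mul hc).aestronglyMeasurable
    · filter_upwards with x
      simp only [Pi.add_apply]
      rw [Real.norm_eq_abs, abs_mul, abs_of_pos (hpos x), hhyveq x]
      have h1 : |(1/2) * ‖b x‖^2 + lap (fun y => Real.log (pt y)) x|
          ≤ (1/2) * ‖b x‖^2 + |lap (fun y => Real.log (pt y)) x| := by
        calc |(1/2) * ‖b x‖^2 + lap (fun y => Real.log (pt y)) x|
            ≤ |(1/2) * ‖b x‖^2| + |lap (fun y => Real.log (pt y)) x| := abs_add_le _ _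
          _ = (1/2) * ‖b x‖^2 + |lap (fun y => Real.log (pt y)) x| := by
              rw [abs_of_nonneg (by positivity)]
      have h2 := (hpos x).le
      nlinarith [mul_le_mul_of_nonneg_left h1 h2]
  have hf1 : Integrable (fun x => ps x * ((1/2) * ‖a x‖^2)) :=
    (hi1.const_mul (1/2)).congr (Eventually.of_forall fun x => by ring)
  -- the divergence integrates to zero
  have hdivsumInt : Integrable (fun x => ∑ i, V' i x (EuclideanSpace.single i 1)) :=
    hDivInt.congr (Eventually.of_forall fun x => (hdivpt x).symm)
  have hDiv0 : ∫ x, (ps x * ⟪a x, b x⟫ + ps x * lap (fun y => Real.log (pt y)) x) = 0 := by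
    have h0 := integral_divergence_eq_zero_euclid V V' hdV hVint hdivsumInt
    rw [show (fun x => ps x * ⟪a x, b x⟫ + ps x * lap (fun y => Real.log (pt y)) x)
      = fun x => ∑ i, V' i x (EuclideanSpace.single i 1) from funext fun x => (hdivpt x).symm]
    exact h0
  -- final assembly
  have hpoint : (fun x => ps x * ((1/2) * ‖a x - b x‖^2))
      = fun x => (ps x * ((1/2) * ‖a x‖^2) + ps x * hyv pt x)
        - (ps x * ⟪a x, b x⟫ + ps x * lap (fun y => Real.log (pt y)) x) := by
    funext x
    have hn := norm_sub_sq_real (a x) (b x)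
    rw [hhyveq x, hn]
    ring
  have hsum : Integrable (fun x => ps x * ((1/2) * ‖a x‖^2) + ps x * hyv pt x) :=
    hf1.add hHyvInt
  rw [hpoint, integral_sub hsum hDivInt, integral_add hf1 hHyvInt, hDiv0, sub_zero]
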